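/- The perpendicular through the incenter meets the side internally: let D, E, F ∈ ℝ² be affinely independent with incenter I. Then there exists a point P in the open segment between D and E (P ∈ openSegment ℝ D E) with ⟪P − I, D − I⟫ = 0; that is, the line through I perpendicular to DI intersects the interior of side DE. -/
import Mathlib


noncomputable section

open EuclideanGeometry Real
open scoped RealInnerProductSpace

/-- The Euclidean plane. -/
abbrev Plane : Type := EuclideanSpace ℝ (Fin 2)

/-- The incenter of triangle `ABC`: the barycentric combination with weights
proportional to the opposite side lengths. -/
def triIncenter (A B C : Plane) : Plane :=
  (dist B C / (dist B C + dist C A + dist A B)) • A +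
  (dist C A / (dist B C + dist C A + dist A B)) • B +
  (dist A B / (dist B C + dist C A + dist A B)) • C

/-- The perpendicular to `DI` through the incenter `I` meets the open side `DE`. -/
theorem perp_through_incenter_meets_side (D E F : Plane)
    (hDEF : AffineIndependent ℝ ![D, E, F])
    (I : Plane) (hI : I = triIncenter D E F) :
    ∃ P ∈ openSegment ℝ D E, ⟪P - I, D - I⟫ = 0 := by
  have hncol : ¬Collinear ℝ ({D, E, F} : Set Plane) :=
    affineIndependent_iff_not_collinear_set.mp hDEF
  set a := dist E F with ha
  set b := dist F D with hb
  set c := dist D E with hc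
  have hDF : D ≠ F := by
    have h := hDEF.injective.ne (show (0:Fin 3) ≠ 2 by decide)
    simpa using h
  have hb0 : 0 < b := by rw [hb, dist_pos]; exact fun h => hDF h.symm
  have htri : b < a + c := by
    rcases lt_or_eq_of_le (dist_triangle F E D) with h | h
    · rw [hb]; rw [ha, hc]
      calc dist F D < dist F E + dist E D := h
        _ = dist E F + dist D E := by rw [dist_comm F E, dist_comm E D]
    · exact absurd ((dist_add_dist_eq_iff).mp h.symm).collinear
        (by intro h'; exact hncol (h'.subset (by intro x hx; simp at hx ⊢; tauto)))
  have hs0 : (0:ℝ) < a + b + c := by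
    have := dist_nonneg (x := E) (y := F); linarith
  set s := a + b + c with hs
  set t := 2 * b / s with ht
  refine ⟨(1 - t) • D + t • E, ⟨1 - t, t, ?_, ?_, by ring, rfl⟩, ?_⟩
  · rw [ht]; rw [sub_pos]; rw [div_lt_one hs0]; linarith
  · rw [ht]; positivity
  · have hI' : I = (a / s) • D + (b / s) • E + (c / s) • F := by
      rw [hI, triIncenter, ← ha, ← hb, ← hc, ← hs]
    have h1 : ((1 - t) • D + t • E) - I = ((c - b)/s) • (D - F) + (b/s) • (E - F) := by
      rw [hI', ht]
      match_scalars <;> field_simp <;> ring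
    have h2 : D - I = ((b + c)/s) • (D - F) + (-(b/s)) • (E - F) := by
      rw [hI']
      match_scalars <;> field_simp <;> ring
    have hnb : ‖D - F‖ = b := by rw [hb, dist_comm, dist_eq_norm]
    have hna : ‖E - F‖ = a := by rw [ha, dist_eq_norm]
    have hip : ⟪D - F, E - F⟫ = (b^2 + a^2 - c^2)/2 := by
      have h3 : ‖(D - F) - (E - F)‖^2 = c^2 := by
        rw [hc, dist_eq_norm]; congr 2; abel
      rw [norm_sub_sq_real, hnb, hna] at h3
      linarith
    rw [h1, h2]
    simp only [inner_add_left, inner_add_right, inner_smul_left, inner_smul_right,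
      real_inner_self_eq_norm_sq, hnb, hna, hip, conj_trivial,
      real_inner_comm (E - F) (D - F)]
    rw [real_inner_comm (D - F) (E - F), hip]
    field_simp
    ring
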